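/- For every natural number k ≥ 4 that is divisible by 4, there exist n ≥ 1, a request sequence r : {0,…,n−1} → ℤ in the line metric (dist(x,y) = |x − y|), and a start point x₀ ∈ ℤ such that: (a) there exists a k-feasible schedule for r from x₀ of cost at most 2^k − 1; and (b) every (k/4)-feasible schedule for r from x₀ has cost at least (k/4)·2^k. -/

import Mathlib

/-- A schedule for `n` requests is a permutation of `{0,…,n−1}`:
`σ t` is the input index of the request served at step `t`. -/
def IsSchedule (n : ℕ) (σ : ℕ → ℕ) : Prop :=
  Set.BijOn σ {t | t < n} {t | t < n}

/-- A schedule is `κ`-feasible if `σ(t) ≤ t + κ − 1` for every step `t`: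
the server reads requests in input order into a buffer of capacity `κ`. -/
def IsFeasible (n κ : ℕ) (σ : ℕ → ℕ) : Prop :=
  ∀ t < n, σ t ≤ t + κ - 1

/-- The travel cost of a schedule `σ` for requests `r` starting at `x₀`,
with respect to the distance function `d`. -/
noncomputable def schedCost {X : Type} (d : X → X → ℝ) (n : ℕ) (r : ℕ → X)
    (x₀ : X) (σ : ℕ → ℕ) : ℝ :=
  d x₀ (r (σ 0)) + ∑ t ∈ Finset.range (n - 1), d (r (σ t)) (r (σ (t + 1)))

/-- The evenly-spaced line metric on `ℤ`. -/
noncomputable def lineDist (x y : ℤ) : ℝ := |(x : ℝ) - (y : ℝ)|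

namespace Stmt9

/-- distance on ℕ -/
def dN (a b : ℕ) : ℕ := max a b - min a b

lemma dN_triangle (a b c : ℕ) : dN a c ≤ dN a b + dN b c := by
  unfold dN; omega

lemma dN_comm (a b : ℕ) : dN a b = dN b a := by unfold dN; omega

/-- chunk length -/
def Lk (k : ℕ) : ℕ := 2 * k - 1

def Kk (k : ℕ) : ℕ := 2 ^ k

def Nk (k : ℕ) : ℕ := Lk k * Kk k

/-- the request sequence (as ℕ values) -/
def rN (k : ℕ) (i : ℕ) : ℕ :=
  if i % Lk k + 2 ≤ k ∧ 2 ^ (i % Lk k + 2) ∣ i / Lk k ∧ i / Lk k + 2 ^ (i % Lk k + 2) ≤ Kk k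
  then i / Lk k + 2 ^ (i % Lk k + 1) else i / Lk k

variable {k : ℕ}

lemma L_pos (hk : 4 ≤ k) : 0 < Lk k := by unfold Lk; omega

lemma K_pos : 0 < Kk k := Nat.pow_pos (n := k) (by norm_num)

lemma div_mul_add (hk : 4 ≤ k) (x s : ℕ) (hs : s < Lk k) : (Lk k * x + s) / Lk k = x := by
  rw [Nat.mul_add_div (L_pos hk), Nat.div_eq_of_lt hs, Nat.add_zero]

lemma mod_mul_add (x s : ℕ) (hs : s < Lk k) : (Lk k * x + s) % Lk k = s := by
  rw [Nat.mul_add_mod, Nat.mod_eq_of_lt hs]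

lemma rN_block (hk : 4 ≤ k) (x d : ℕ) (hd : d < k) : rN k (Lk k * x + (k - 1 + d)) = x := by
  have hs : k - 1 + d < Lk k := by unfold Lk; omega
  unfold rN
  rw [div_mul_add hk x _ hs, mod_mul_add x _ hs]
  have : ¬ (k - 1 + d + 2 ≤ k ∧ 2 ^ (k - 1 + d + 2) ∣ x ∧ x + 2 ^ (k - 1 + d + 2) ≤ Kk k) := by
    rintro ⟨h1, -, -⟩; omega
  rw [if_neg this]

lemma rN_teaser (hk : 4 ≤ k) (j y : ℕ) (hj1 : 1 ≤ j) (hjk : j < k) (hdvd : 2 ^ (j + 1) ∣ y)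
    (hle : y + 2 ^ (j + 1) ≤ Kk k) : rN k (Lk k * y + (j - 1)) = y + 2 ^ j := by
  have hs : j - 1 < Lk k := by unfold Lk; omega
  unfold rN
  rw [div_mul_add hk y _ hs, mod_mul_add y _ hs]
  have he2 : j - 1 + 2 = j + 1 := by omega
  have he1 : j - 1 + 1 = j := by omega
  rw [he2, he1, if_pos ⟨by omega, hdvd, hle⟩]

lemma rN_ge (i : ℕ) : i / Lk k ≤ rN k i := by
  unfold rN; split
  · exact Nat.le_add_right _ _
  · exact le_refl _

lemma rN_lt (i : ℕ) (hi : i < Nk k) : rN k i < Kk k := by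
  unfold Nk at hi
  have hx : i / Lk k < Kk k := Nat.div_lt_of_lt_mul hi
  unfold rN; split
  · next h =>
      rcases h with ⟨-, -, h3⟩
      have : (2:ℕ) ^ (i % Lk k + 1) < 2 ^ (i % Lk k + 2) := by
        apply Nat.pow_lt_pow_right (by norm_num); omega
      omega
  · exact hx

/-- If the value differs from the chunk index, it is a valid teaser slot. -/
lemma rN_teaser_char (i : ℕ) (h : rN k i ≠ i / Lk k) :
    i % Lk k + 2 ≤ k ∧ 2 ^ (i % Lk k + 2) ∣ i / Lk k ∧ i / Lk k + 2 ^ (i % Lk k + 2) ≤ Kk k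
    ∧ rN k i = i / Lk k + 2 ^ (i % Lk k + 1) := by
  unfold rN at h ⊢
  split at h
  · next hc => exact ⟨hc.1, hc.2.1, hc.2.2, by rw [if_pos hc]⟩
  · exact absurd rfl h

/-- the set of teasers, as pairs (j, y) -/
def Vt (k : ℕ) : Finset (ℕ × ℕ) :=
  (Finset.Ico 1 k ×ˢ Finset.range (Kk k)).filter
    fun p => 2 ^ (p.1 + 1) ∣ p.2 ∧ p.2 + 2 ^ (p.1 + 1) ≤ Kk k

/-- input index of a teaser -/
def idx (k : ℕ) (v : ℕ × ℕ) : ℕ := Lk k * v.2 + (v.1 - 1)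

/-- target (position) of a teaser -/
def tgt (v : ℕ × ℕ) : ℕ := v.2 + 2 ^ v.1

lemma Vt_mem {v : ℕ × ℕ} (hv : v ∈ Vt k) :
    1 ≤ v.1 ∧ v.1 < k ∧ v.2 < Kk k ∧ 2 ^ (v.1 + 1) ∣ v.2 ∧ v.2 + 2 ^ (v.1 + 1) ≤ Kk k := by
  unfold Vt at hv
  simp only [Finset.mem_filter, Finset.mem_product, Finset.mem_Ico, Finset.mem_range] at hv
  tauto

lemma rN_idx (hk : 4 ≤ k) {v : ℕ × ℕ} (hv : v ∈ Vt k) : rN k (idx k v) = tgt v := by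
  obtain ⟨h1, h2, h3, h4, h5⟩ := Vt_mem hv
  exact rN_teaser hk v.1 v.2 h1 h2 h4 h5

lemma idx_lt (hk : 4 ≤ k) {v : ℕ × ℕ} (hv : v ∈ Vt k) : idx k v < Nk k := by
  obtain ⟨h1, h2, h3, h4, h5⟩ := Vt_mem hv
  unfold idx Nk
  have : v.1 - 1 < Lk k := by unfold Lk; omega
  calc Lk k * v.2 + (v.1 - 1) < Lk k * v.2 + Lk k := by omega
  _ = Lk k * (v.2 + 1) := by ring
  _ ≤ Lk k * Kk k := Nat.mul_le_mul_left _ (by omega)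

lemma idx_injOn (hk : 4 ≤ k) : Set.InjOn (idx k) (Vt k) := by
  intro v hv w hw h
  obtain ⟨hv1, hv2, -, -, -⟩ := Vt_mem hv
  obtain ⟨hw1, hw2, -, -, -⟩ := Vt_mem hw
  unfold idx at h
  have hsv : v.1 - 1 < Lk k := by unfold Lk; omega
  have hsw : w.1 - 1 < Lk k := by unfold Lk; omega
  have h2 : v.2 = w.2 := by
    have := congrArg (· / Lk k) h
    simpa [div_mul_add hk _ _ hsv, div_mul_add hk _ _ hsw] using this
  have h1 : v.1 = w.1 := by
    have := congrArg (· % Lk k) h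
    simp only [mod_mul_add _ _ hsv, mod_mul_add _ _ hsw] at this
    omega
  exact Prod.ext h1 h2

/-- teaser target fits -/
lemma tgt_lt {v : ℕ × ℕ} (hv : v ∈ Vt k) : tgt v + 2 ^ v.1 ≤ Kk k := by
  obtain ⟨h1, h2, h3, h4, h5⟩ := Vt_mem hv
  unfold tgt
  have : (2:ℕ) ^ v.1 + 2 ^ v.1 = 2 ^ (v.1 + 1) := by ring
  omega

/-- targets determine teasers -/
lemma tgt_injOn : Set.InjOn tgt (Vt k) := by
  intro v hv w hw h
  obtain ⟨hv1, hv2, hv3, hv4, hv5⟩ := Vt_mem hv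
  obtain ⟨hw1, hw2, hw3, hw4, hw5⟩ := Vt_mem hw
  unfold tgt at h
  rcases Nat.lt_trichotomy v.1 w.1 with hlt | heq | hgt
  · exfalso
    have hd1 : 2 ^ (v.1 + 1) ∣ w.2 := dvd_trans (pow_dvd_pow 2 (by omega)) hw4
    have hd2 : (2:ℕ) ^ (v.1 + 1) ∣ 2 ^ w.1 := pow_dvd_pow 2 (by omega)
    have hdd : 2 ^ (v.1 + 1) ∣ 2 ^ v.1 := by
      have : (2:ℕ)^(v.1+1) ∣ v.2 + 2 ^ v.1 := h ▸ dvd_add hd1 hd2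
      exact (Nat.dvd_add_right hv4).mp this
    have h6 := Nat.le_of_dvd (Nat.pow_pos (by norm_num)) hdd
    have : (2:ℕ) ^ v.1 < 2 ^ (v.1 + 1) := Nat.pow_lt_pow_right (by norm_num) (by omega)
    omega
  · have : v.2 = w.2 := by
      have : (2:ℕ) ^ v.1 = 2 ^ w.1 := by rw [heq]
      omega
    exact Prod.ext heq this
  · exfalso
    have hd1 : 2 ^ (w.1 + 1) ∣ v.2 := dvd_trans (pow_dvd_pow 2 (by omega)) hv4
    have hd2 : (2:ℕ) ^ (w.1 + 1) ∣ 2 ^ v.1 := pow_dvd_pow 2 (by omega)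
    have hdd : 2 ^ (w.1 + 1) ∣ 2 ^ w.1 := by
      have : (2:ℕ)^(w.1+1) ∣ w.2 + 2 ^ w.1 := h ▸ dvd_add hd1 hd2
      exact (Nat.dvd_add_right hw4).mp this
    have h6 := Nat.le_of_dvd (Nat.pow_pos (by norm_num)) hdd
    have : (2:ℕ) ^ w.1 < 2 ^ (w.1 + 1) := Nat.pow_lt_pow_right (by norm_num) (by omega)
    omega

-- the key counting lemma for upper-bound feasibility
lemma badcount (i : ℕ) :
    ((Finset.range i).filter fun i' => rN k i < rN k i').card ≤ k - 1 := by
  classical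
  rw [show k - 1 = (Finset.range (k-1)).card from (Finset.card_range _).symm]
  apply Finset.card_le_card_of_injOn (fun i' => i' % Lk k)
  · -- maps into range (k-1)
    intro i' hi'
    simp only [Finset.mem_coe, Finset.mem_filter, Finset.mem_range] at hi' ⊢
    obtain ⟨hlt, hbig⟩ := hi'
    have hne : rN k i' ≠ i' / Lk k := by
      intro he
      have h1 : i' / Lk k ≤ i / Lk k := Nat.div_le_div_right (le_of_lt hlt)
      have h2 := rN_ge (k := k) i
      omega
    obtain ⟨hs, -, -, -⟩ := rN_teaser_char i' hne
    omega
  · -- injective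
    intro a ha b hb hab
    simp only [Finset.coe_filter, Set.mem_setOf_eq, Finset.mem_range] at ha hb
    obtain ⟨halt, habig⟩ := ha
    obtain ⟨hblt, hbbig⟩ := hb
    have hane : rN k a ≠ a / Lk k := by
      intro he
      have h1 : a / Lk k ≤ i / Lk k := Nat.div_le_div_right (le_of_lt halt)
      have h2 := rN_ge (k := k) i
      omega
    have hbne : rN k b ≠ b / Lk k := by
      intro he
      have h1 : b / Lk k ≤ i / Lk k := Nat.div_le_div_right (le_of_lt hblt)
      have h2 := rN_ge (k := k) i
      omega
    obtain ⟨hsa, hda, -, hva⟩ := rN_teaser_char a hane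
    obtain ⟨hsb, hdb, -, hvb⟩ := rN_teaser_char b hbne
    -- same slot
    set s := a % Lk k with hs_def
    have hsb' : b % Lk k = s := hab.symm
    rw [hsb'] at hdb hvb
    -- if chunks are equal, done
    rcases Nat.lt_trichotomy (a / Lk k) (b / Lk k) with hlt | heq | hgt
    · exfalso
      have hdvd : 2 ^ (s+2) ∣ b / Lk k - a / Lk k := Nat.dvd_sub hdb hda
      have hge : a / Lk k + 2 ^ (s+2) ≤ b / Lk k := by
        have := Nat.le_of_dvd (by omega) hdvd
        omega
      -- rN a = a/L + 2^{s+1} < b/L ≤ i/L ≤ rN i, contradicting rN i < rN a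
      have hp : (2:ℕ) ^ (s+1) < 2 ^ (s+2) := Nat.pow_lt_pow_right (by norm_num) (by omega)
      have h1 : b / Lk k ≤ i / Lk k := Nat.div_le_div_right (le_of_lt hblt)
      have h2 := rN_ge (k := k) i
      omega
    · have ha' := Nat.div_add_mod a (Lk k)
      have hb' := Nat.div_add_mod b (Lk k)
      rw [heq] at ha'
      omega
    · exfalso
      have hdvd : 2 ^ (s+2) ∣ a / Lk k - b / Lk k := Nat.dvd_sub hda hdb
      have hge : b / Lk k + 2 ^ (s+2) ≤ a / Lk k := by
        have := Nat.le_of_dvd (by omega) hdvd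
        omega
      have hp : (2:ℕ) ^ (s+1) < 2 ^ (s+2) := Nat.pow_lt_pow_right (by norm_num) (by omega)
      have h1 : a / Lk k ≤ i / Lk k := Nat.div_le_div_right (le_of_lt halt)
      have h2 := rN_ge (k := k) i
      omega


/-! ### upper bound: the sorted schedule -/

lemma lineDist_cast (a b : ℕ) : lineDist (a:ℤ) (b:ℤ) = (dN a b : ℝ) := by
  unfold lineDist dN
  rcases le_total a b with h | h
  · rw [Nat.max_eq_right h, Nat.min_eq_left h, abs_sub_comm,
      abs_of_nonneg (sub_nonneg.mpr (by exact_mod_cast Nat.cast_le.mpr h)), Nat.cast_sub h]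
    push_cast; ring
  · rw [Nat.max_eq_left h, Nat.min_eq_right h,
      abs_of_nonneg (sub_nonneg.mpr (by exact_mod_cast Nat.cast_le.mpr h)), Nat.cast_sub h]
    push_cast; ring

lemma N_pos (hk : 4 ≤ k) : 0 < Nk k := Nat.mul_pos (L_pos hk) K_pos

def keyf (k : ℕ) (i : ℕ) : ℕ := Nk k * rN k i + i

lemma keyf_mod (hk : 4 ≤ k) (i : ℕ) (hi : i < Nk k) : keyf k i % Nk k = i := by
  unfold keyf; rw [Nat.mul_add_mod, Nat.mod_eq_of_lt hi]

lemma keyf_div (hk : 4 ≤ k) (i : ℕ) (hi : i < Nk k) : keyf k i / Nk k = rN k i := by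
  unfold keyf; rw [Nat.mul_add_div (N_pos hk), Nat.div_eq_of_lt hi, Nat.add_zero]

lemma keyf_injOn (hk : 4 ≤ k) : Set.InjOn (keyf k) (Finset.range (Nk k)) := by
  intro a ha b hb h
  simp only [Finset.coe_range, Set.mem_Iio] at ha hb
  have := congrArg (· % Nk k) h
  simpa [keyf_mod hk a ha, keyf_mod hk b hb] using this

lemma keyf_lt_of_rN_lt (hk : 4 ≤ k) {a b : ℕ} (ha : a < Nk k) (h : rN k a < rN k b) :
    keyf k a < keyf k b := by
  unfold keyf
  calc Nk k * rN k a + a < Nk k * rN k a + Nk k := by omega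
  _ = Nk k * (rN k a + 1) := by ring
  _ ≤ Nk k * rN k b := Nat.mul_le_mul_left _ (by omega)
  _ ≤ Nk k * rN k b + b := Nat.le_add_right _ _

def Sf (k : ℕ) : Finset ℕ := (Finset.range (Nk k)).image (keyf k)

lemma Sf_card (hk : 4 ≤ k) : (Sf k).card = Nk k := by
  unfold Sf
  rw [Finset.card_image_of_injOn (keyf_injOn hk), Finset.card_range]

noncomputable def eIso (k : ℕ) (hk : 4 ≤ k) : Fin (Nk k) ≃o {x // x ∈ Sf k} :=
  (Sf k).orderIsoOfFin (Sf_card hk)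

noncomputable def σup (k : ℕ) (hk : 4 ≤ k) : ℕ → ℕ :=
  fun t => if h : t < Nk k then ((eIso k hk ⟨t, h⟩ : ℕ) % Nk k) else t

lemma σup_spec (hk : 4 ≤ k) (t : ℕ) (h : t < Nk k) :
    σup k hk t < Nk k ∧ keyf k (σup k hk t) = (eIso k hk ⟨t, h⟩ : ℕ) := by
  have hmem : ((eIso k hk ⟨t, h⟩ : ℕ)) ∈ Sf k := (eIso k hk ⟨t, h⟩).2
  unfold Sf at hmem
  rw [Finset.mem_image] at hmem
  obtain ⟨i, hi, hkey⟩ := hmem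
  rw [Finset.mem_range] at hi
  have hmod := keyf_mod hk i hi
  rw [hkey] at hmod
  have hσ : σup k hk t = i := by
    unfold σup
    rw [dif_pos h]
    exact hmod
  rw [hσ, hkey]
  exact ⟨hi, rfl⟩

lemma σup_lt (hk : 4 ≤ k) (t : ℕ) (h : t < Nk k) : σup k hk t < Nk k :=
  (σup_spec hk t h).1

lemma σup_inj (hk : 4 ≤ k) {t t' : ℕ} (h : t < Nk k) (h' : t' < Nk k)
    (he : σup k hk t = σup k hk t') : t = t' := by
  have h1 := (σup_spec hk t h).2
  have h2 := (σup_spec hk t' h').2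
  rw [he, h2] at h1
  have h3 : eIso k hk ⟨t', h'⟩ = eIso k hk ⟨t, h⟩ := Subtype.ext h1
  have h4 := (eIso k hk).injective h3
  have h5 := congrArg Fin.val h4
  simpa using h5.symm

lemma σup_surj (hk : 4 ≤ k) (m : ℕ) (hm : m < Nk k) :
    ∃ t, t < Nk k ∧ σup k hk t = m := by
  have hmem : keyf k m ∈ Sf k := Finset.mem_image_of_mem _ (Finset.mem_range.mpr hm)
  obtain ⟨t, ht⟩ := (eIso k hk).surjective ⟨keyf k m, hmem⟩
  refine ⟨t.val, t.isLt, ?_⟩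
  have := (σup_spec hk t.val t.isLt).2
  have h2 : (eIso k hk ⟨t.val, t.isLt⟩ : ℕ) = keyf k m := by
    rw [show (⟨t.val, t.isLt⟩ : Fin (Nk k)) = t from rfl, ht]
  rw [h2] at this
  exact keyf_injOn hk
    (by simp [Finset.coe_range, Set.mem_Iio]; exact σup_lt hk t.val t.isLt)
    (by simp [Finset.coe_range, Set.mem_Iio]; exact hm) this

lemma σup_isSchedule (hk : 4 ≤ k) : IsSchedule (Nk k) (σup k hk) := by
  refine ⟨fun t ht => σup_lt hk t ht, fun t ht t' ht' he => σup_inj hk ht ht' he, ?_⟩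
  intro m hm
  obtain ⟨t, ht, hts⟩ := σup_surj hk m hm
  exact ⟨t, ht, hts⟩

lemma σup_feasible (hk : 4 ≤ k) : IsFeasible (Nk k) k (σup k hk) := by
  intro t ht
  classical
  set i := σup k hk t with hidef
  have hiN : i < Nk k := σup_lt hk t ht
  have hkey : keyf k i = (eIso k hk ⟨t, ht⟩ : ℕ) := (σup_spec hk t ht).2
  -- B = indices below i with value ≤ value of i
  set B := (Finset.range i).filter (fun i' => ¬ rN k i < rN k i') with hBdef
  have hBcard : B.card ≤ t := by
    rw [show t = (Finset.range t).card from (Finset.card_range t).symm]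
    have hmemS : ∀ i' ∈ B, keyf k i' ∈ Sf k := by
      intro i' hi'
      simp only [hBdef, Finset.mem_filter, Finset.mem_range] at hi'
      exact Finset.mem_image_of_mem _ (Finset.mem_range.mpr (lt_trans hi'.1 hiN))
    apply Finset.card_le_card_of_injOn
      (fun i' => if h : keyf k i' ∈ Sf k then ((eIso k hk).symm ⟨keyf k i', h⟩ : Fin (Nk k)).val else 0)
    · intro i' hi'
      have hm := hmemS i' hi'
      simp only [Finset.mem_coe, dif_pos hm, Finset.mem_range]
      simp only [hBdef, Finset.mem_coe, Finset.mem_filter, Finset.mem_range] at hi'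
      have hklt : keyf k i' < keyf k i := by
        unfold keyf
        have h1 : rN k i' ≤ rN k i := by omega
        have h2 : i' < i := hi'.1
        have := Nat.mul_le_mul_left (Nk k) h1
        omega
      -- e.symm ⟨keyf i'⟩ < ⟨t, ht⟩
      rw [hkey] at hklt
      have hsub : (⟨keyf k i', hm⟩ : {x // x ∈ Sf k}) < eIso k hk ⟨t, ht⟩ :=
        Subtype.coe_lt_coe.mp hklt
      have hfin : (eIso k hk).symm ⟨keyf k i', hm⟩ < ⟨t, ht⟩ := by
        rw [← OrderIso.lt_iff_lt (eIso k hk), OrderIso.apply_symm_apply]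
        exact hsub
      exact Fin.lt_def.mp hfin
    · intro a ha b hb hab
      have hma := hmemS a (by exact_mod_cast ha)
      have hmb := hmemS b (by exact_mod_cast hb)
      simp only [dif_pos hma, dif_pos hmb] at hab
      have : (eIso k hk).symm ⟨keyf k a, hma⟩ = (eIso k hk).symm ⟨keyf k b, hmb⟩ :=
        Fin.ext hab
      have := (eIso k hk).symm.injective this
      have hkab : keyf k a = keyf k b := congrArg Subtype.val this
      simp only [hBdef, Finset.coe_filter, Set.mem_setOf_eq, Finset.mem_range] at ha hb
      exact keyf_injOn hk
        (by simp [Finset.coe_range, Set.mem_Iio]; exact lt_trans ha.1 hiN)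
        (by simp [Finset.coe_range, Set.mem_Iio]; exact lt_trans hb.1 hiN) hkab
  have hsplit := Finset.card_filter_add_card_filter_not
    (s := Finset.range i) (p := fun i' => rN k i < rN k i')
  have hbad := badcount (k := k) i
  rw [Finset.card_range] at hsplit
  have hBeq : (Finset.filter (fun a => ¬ (fun i' => rN k i < rN k i') a) (Finset.range i)).card
      = B.card := rfl
  rw [hBeq] at hsplit
  omega

lemma σup_mono (hk : 4 ≤ k) {t t' : ℕ} (h : t ≤ t') (ht' : t' < Nk k) :
    rN k (σup k hk t) ≤ rN k (σup k hk t') := by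
  have ht : t < Nk k := lt_of_le_of_lt h ht'
  have h1 := (σup_spec hk t ht).2
  have h2 := (σup_spec hk t' ht').2
  have hle : (eIso k hk ⟨t, ht⟩ : ℕ) ≤ (eIso k hk ⟨t', ht'⟩ : ℕ) := by
    rw [Subtype.coe_le_coe]
    exact (eIso k hk).monotone (Fin.mk_le_mk.mpr h)
  rw [← h1, ← h2] at hle
  have hdd : keyf k (σup k hk t) / Nk k ≤ keyf k (σup k hk t') / Nk k :=
    Nat.div_le_div_right hle
  rwa [keyf_div hk _ (σup_lt hk t ht), keyf_div hk _ (σup_lt hk t' ht')] at hdd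

lemma σup_zero (hk : 4 ≤ k) : rN k (σup k hk 0) = 0 := by
  have hN := N_pos hk
  have hi0 : k - 1 < Nk k := by
    unfold Nk
    calc k - 1 < Lk k := by unfold Lk; omega
    _ ≤ Lk k * Kk k := Nat.le_mul_of_pos_right _ K_pos
  have hr0 : rN k (k - 1) = 0 := by
    have := rN_block hk 0 0 (by omega)
    simpa using this
  have hkey0 : keyf k (k-1) = k - 1 := by unfold keyf; rw [hr0]; ring
  have hmem : (k-1 : ℕ) ∈ Sf k := by
    have := Finset.mem_image_of_mem (keyf k) (Finset.mem_range.mpr hi0)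
    rwa [hkey0] at this
  have hle : (eIso k hk ⟨0, hN⟩ : ℕ) ≤ k - 1 := by
    have h1 : (⟨0, hN⟩ : Fin (Nk k)) ≤ (eIso k hk).symm ⟨k-1, hmem⟩ :=
      Fin.le_def.mpr (Nat.zero_le _)
    have h2 := (eIso k hk).monotone h1
    rw [OrderIso.apply_symm_apply] at h2
    exact Subtype.coe_le_coe.mpr h2
  have hspec := (σup_spec hk 0 hN).2
  rw [← hspec] at hle
  have hdd : keyf k (σup k hk 0) / Nk k = 0 := Nat.div_eq_of_lt (lt_of_le_of_lt hle hi0)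
  rwa [keyf_div hk _ (σup_lt hk 0 hN)] at hdd

lemma σup_last (hk : 4 ≤ k) : rN k (σup k hk (Nk k - 1)) = Kk k - 1 := by
  have hN := N_pos hk
  have hlast : Nk k - 1 < Nk k := by omega
  set i1 := Lk k * (Kk k - 1) + (k - 1) with hi1def
  have hKeq : Kk k = (Kk k - 1) + 1 := by have := K_pos (k := k); omega
  have h2 : Lk k * (Kk k - 1) + Lk k = Lk k * Kk k := by
    conv_rhs => rw [hKeq]
    ring
  have hi1N : i1 < Nk k := by
    unfold Nk
    have h1 : k - 1 < Lk k := by unfold Lk; omega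
    omega
  have hr1 : rN k i1 = Kk k - 1 := by
    have := rN_block hk (Kk k - 1) 0 (by omega)
    simpa using this
  have hkey1 : keyf k i1 = Nk k * (Kk k - 1) + i1 := by unfold keyf; rw [hr1]
  have hmem : keyf k i1 ∈ Sf k := Finset.mem_image_of_mem _ (Finset.mem_range.mpr hi1N)
  have hge : Nk k * (Kk k - 1) ≤ (eIso k hk ⟨Nk k - 1, hlast⟩ : ℕ) := by
    have h1 : (eIso k hk).symm ⟨keyf k i1, hmem⟩ ≤ (⟨Nk k - 1, hlast⟩ : Fin (Nk k)) := by
      apply Fin.le_def.mpr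
      have hIs := ((eIso k hk).symm ⟨keyf k i1, hmem⟩).isLt
      simp only []
      omega
    have h2 := (eIso k hk).monotone h1
    rw [OrderIso.apply_symm_apply] at h2
    have h3 : keyf k i1 ≤ (eIso k hk ⟨Nk k - 1, hlast⟩ : ℕ) := Subtype.coe_le_coe.mpr h2
    have h4 : Nk k * (Kk k - 1) ≤ keyf k i1 := by rw [hkey1]; exact Nat.le_add_right _ _
    exact le_trans h4 h3
  have hspec := (σup_spec hk (Nk k - 1) hlast).2
  rw [← hspec] at hge
  have hdivge : Kk k - 1 ≤ keyf k (σup k hk (Nk k - 1)) / Nk k := by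
    rw [Nat.le_div_iff_mul_le hN]
    calc (Kk k - 1) * Nk k = Nk k * (Kk k - 1) := by ring
    _ ≤ keyf k (σup k hk (Nk k-1)) := hge
  rw [keyf_div hk _ (σup_lt hk _ hlast)] at hdivge
  have hub := rN_lt (k := k) _ (σup_lt hk _ hlast)
  omega


lemma mono_le (v : ℕ → ℕ) : ∀ m, (∀ t < m, v t ≤ v (t+1)) → v 0 ≤ v m := by
  intro m
  induction m with
  | zero => intro _; exact le_refl _
  | succ m ih => intro h; exact le_trans (ih fun t ht => h t (by omega)) (h m (by omega))

lemma tele_sum (v : ℕ → ℕ) : ∀ m, (∀ t < m, v t ≤ v (t+1)) →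
    ∑ t ∈ Finset.range m, dN (v t) (v (t+1)) = v m - v 0 := by
  intro m
  induction m with
  | zero => intro _; simp
  | succ m ih =>
    intro h
    rw [Finset.sum_range_succ, ih (fun t ht => h t (by omega))]
    have h1 : v 0 ≤ v m := mono_le v m (fun t ht => h t (by omega))
    have h2 : v m ≤ v (m+1) := h m (by omega)
    unfold dN
    omega

lemma σup_cost (hk : 4 ≤ k) :
    schedCost lineDist (Nk k) (fun i => ((rN k i : ℕ) : ℤ)) 0 (σup k hk) ≤ (2:ℝ)^k - 1 := by
  unfold schedCost
  have hN := N_pos hk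
  have hz : rN k (σup k hk 0) = 0 := σup_zero hk
  have hfirst : lineDist 0 ((rN k (σup k hk 0) : ℕ) : ℤ) = 0 := by
    rw [show ((0:ℤ)) = ((0:ℕ):ℤ) by norm_num, lineDist_cast, hz]
    simp [dN]
  have hmono : ∀ t < Nk k - 1, rN k (σup k hk t) ≤ rN k (σup k hk (t+1)) := by
    intro t ht
    exact σup_mono hk (Nat.le_succ t) (by omega)
  have hsum : ∑ t ∈ Finset.range (Nk k - 1),
      lineDist ((rN k (σup k hk t) : ℕ) : ℤ) ((rN k (σup k hk (t+1)) : ℕ) : ℤ)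
      = ((Kk k - 1 : ℕ) : ℝ) := by
    have hc : ∀ t ∈ Finset.range (Nk k - 1),
        lineDist ((rN k (σup k hk t) : ℕ) : ℤ) ((rN k (σup k hk (t+1)) : ℕ) : ℤ)
        = ((dN (rN k (σup k hk t)) (rN k (σup k hk (t+1))) : ℕ) : ℝ) :=
      fun t ht => lineDist_cast _ _
    rw [Finset.sum_congr rfl hc, ← Nat.cast_sum]
    congr 1
    rw [tele_sum (fun t => rN k (σup k hk t)) (Nk k - 1) hmono]
    have hlast : rN k (σup k hk (Nk k - 1)) = Kk k - 1 := σup_last hk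
    rw [hz, hlast]
    omega
  rw [hfirst, hsum]
  have h1 : (1:ℕ) ≤ Kk k := K_pos
  rw [Nat.cast_sub h1]
  unfold Kk
  push_cast
  norm_num

lemma upper_bundle (hk : 4 ≤ k) :
    ∃ σ, IsSchedule (Nk k) σ ∧ IsFeasible (Nk k) k σ ∧
      schedCost lineDist (Nk k) (fun i => ((rN k i : ℕ) : ℤ)) 0 σ ≤ (2:ℝ)^k - 1 :=
  ⟨σup k hk, σup_isSchedule hk, σup_feasible hk, σup_cost hk⟩


/-! ### lower bound: combinatorial helpers -/

-- chain sum lemma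
lemma chain_sum (S : Finset ℕ) : (∀ a ∈ S, ∀ b ∈ S, a < b → 2*a ≤ b) →
    ∀ M : ℕ, (∀ a ∈ S, a ≤ M) → S.sum id ≤ 2*M := by
  classical
  induction S using Finset.strongInduction with
  | _ S ih =>
    intro hdb M hM
    rcases Finset.eq_empty_or_nonempty S with rfl | hne
    · simp
    · have hmax := S.max'_mem hne
      set m := S.max' hne with hm
      have herase : (S.erase m).sum id ≤ m := by
        rcases Finset.eq_empty_or_nonempty (S.erase m) with he | hne'
        · simp [he]
        · have hsub : S.erase m ⊂ S := Finset.erase_ssubset hmax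
          have hmem' : ∀ a ∈ S.erase m, a ∈ S := fun a ha => Finset.mem_of_mem_erase ha
          have hdb' : ∀ a ∈ S.erase m, ∀ b ∈ S.erase m, a < b → 2*a ≤ b :=
            fun a ha b hb hab => hdb a (hmem' a ha) b (hmem' b hb) hab
          have hM' : ∀ a ∈ S.erase m, a ≤ m / 2 := by
            intro a ha
            have haS := hmem' a ha
            have hne2 : a ≠ m := Finset.ne_of_mem_erase ha
            have : a < m := lt_of_le_of_ne (Finset.le_max' S a haS) hne2
            have := hdb a haS m hmax this
            omega
          have := ih (S.erase m) hsub hdb' (m/2) hM'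
          omega
      have hsum : S.sum id = m + (S.erase m).sum id := by
        rw [← Finset.add_sum_erase S id hmax]
        simp only [id_eq]
      have hmM : m ≤ M := hM m hmax
      omega

-- geometric sum
lemma two_pow_sum : ∀ m : ℕ, ∑ i ∈ Finset.range m, 2^i = 2^m - 1 := by
  intro m
  induction m with
  | zero => simp
  | succ m ih =>
    rw [Finset.sum_range_succ, ih]
    have : (1:ℕ) ≤ 2^m := Nat.one_le_two_pow
    have : (2:ℕ)^(m+1) = 2^m + 2^m := by ring
    omega


/-- the total demand of all teasers -/
lemma sumD (hk : 4 ≤ k) : ∑ v ∈ Vt k, (2^v.1 - 1) = (k-2) * 2^(k-1) + 1 := by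
  classical
  -- fiberwise over j
  have hmaps : ∀ v ∈ Vt k, v.1 ∈ Finset.Ico 1 k := by
    intro v hv
    obtain ⟨h1, h2, -, -, -⟩ := Vt_mem hv
    rw [Finset.mem_Ico]; exact ⟨h1, h2⟩
  have hfib := Finset.sum_fiberwise_of_maps_to hmaps (fun v => 2^v.1 - 1)
  rw [← hfib]
  -- each fiber
  have hfiber : ∀ j ∈ Finset.Ico 1 k,
      ∑ v ∈ (Vt k).filter (fun v => v.1 = j), (2^v.1 - 1) = 2^(k-1-j) * (2^j - 1) := by
    intro j hj
    rw [Finset.mem_Ico] at hj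
    have hconst : ∀ v ∈ (Vt k).filter (fun v => v.1 = j), (2^v.1 - 1 : ℕ) = 2^j - 1 := by
      intro v hv
      rw [Finset.mem_filter] at hv
      rw [hv.2]
    rw [Finset.sum_congr rfl hconst, Finset.sum_const, smul_eq_mul]
    congr 1
    -- card of the fiber
    have himg : (Vt k).filter (fun v => v.1 = j)
        = (Finset.range (2^(k-1-j))).image (fun c => (j, c * 2^(j+1))) := by
      ext v
      simp only [Finset.mem_filter, Finset.mem_image, Finset.mem_range]
      constructor
      · rintro ⟨hv, rfl⟩
        obtain ⟨-, -, -, h4, h5⟩ := Vt_mem hv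
        obtain ⟨c, hc⟩ := h4
        refine ⟨c, ?_, ?_⟩
        · have hpow : 2^(k-1-v.1) * 2^(v.1+1) = 2^k := by
            rw [← pow_add]; congr 1; omega
          have h6 : (c+1) * 2^(v.1+1) ≤ 2^(k-1-v.1) * 2^(v.1+1) := by
            unfold Kk at h5
            calc (c+1) * 2^(v.1+1) = v.2 + 2^(v.1+1) := by rw [hc]; ring
            _ ≤ 2^k := h5
            _ = 2^(k-1-v.1) * 2^(v.1+1) := hpow.symm
          have := Nat.le_of_mul_le_mul_right h6 (Nat.pow_pos (by norm_num))
          omega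
        · refine Prod.ext rfl ?_
          simp only []
          rw [hc]; ring
      · rintro ⟨c, hc, rfl⟩
        have hpow : 2^(k-1-j) * 2^(j+1) = 2^k := by
          rw [← pow_add]; congr 1; omega
        have hmul : (c+1) * 2^(j+1) ≤ 2^k := by
          rw [← hpow]
          exact Nat.mul_le_mul_right _ (by omega)
        have hlt : c * 2^(j+1) < 2^k := by
          have h0 : (0:ℕ) < 2^(j+1) := Nat.pow_pos (by norm_num)
          have h9 : (c+1) * 2^(j+1) = c * 2^(j+1) + 2^(j+1) := by ring
          omega
        refine ⟨?_, rfl⟩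
        unfold Vt
        simp only [Finset.mem_filter, Finset.mem_product, Finset.mem_Ico, Finset.mem_range]
        refine ⟨⟨⟨hj.1, hj.2⟩, ?_⟩, ⟨dvd_mul_left _ _, ?_⟩⟩
        · exact hlt
        · unfold Kk
          calc c * 2^(j+1) + 2^(j+1) = (c+1) * 2^(j+1) := by ring
          _ ≤ 2^k := hmul
    rw [himg, Finset.card_image_of_injOn, Finset.card_range]
    intro a _ b _ hab
    have := congrArg Prod.snd hab
    simp only at this
    exact Nat.eq_of_mul_eq_mul_right (Nat.pow_pos (by norm_num)) this
  rw [Finset.sum_congr rfl hfiber]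
  -- now compute ∑_{j ∈ Ico 1 k} 2^(k-1-j) * (2^j - 1)
  have hterm : ∀ j ∈ Finset.Ico 1 k, 2^(k-1-j) * (2^j - 1) = 2^(k-1) - 2^(k-1-j) := by
    intro j hj
    rw [Finset.mem_Ico] at hj
    have hpow : 2^(k-1-j) * 2^j = 2^(k-1) := by
      rw [← pow_add]; congr 1; omega
    have h1 : (1:ℕ) ≤ 2^j := Nat.one_le_two_pow
    have h2 : 2^(k-1-j) * (2^j - 1) + 2^(k-1-j) = 2^(k-1-j) * 2^j := by
      rw [← Nat.mul_succ]
      congr 1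
      omega
    omega
  rw [Finset.sum_congr rfl hterm]
  have hsplit : ∑ j ∈ Finset.Ico 1 k, ((2^(k-1) - 2^(k-1-j)) + 2^(k-1-j))
      = ∑ j ∈ Finset.Ico 1 k, ((2^(k-1) - 2^(k-1-j))) + ∑ j ∈ Finset.Ico 1 k, 2^(k-1-j) := by
    rw [Finset.sum_add_distrib]
  have hconst2 : ∀ j ∈ Finset.Ico 1 k, ((2^(k-1) - 2^(k-1-j)) + 2^(k-1-j) : ℕ) = 2^(k-1) := by
    intro j hj
    rw [Finset.mem_Ico] at hj
    have : (2:ℕ)^(k-1-j) ≤ 2^(k-1) := Nat.pow_le_pow_right (by norm_num) (by omega)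
    omega
  rw [Finset.sum_congr rfl hconst2, Finset.sum_const, Nat.card_Ico, smul_eq_mul] at hsplit
  -- geometric part
  have hgeom : ∑ j ∈ Finset.Ico 1 k, 2^(k-1-j) = 2^(k-1) - 1 := by
    rw [← two_pow_sum (k-1)]
    apply Finset.sum_nbij' (i := fun j => k-1-j) (j := fun i => k-1-i)
    · intro a ha
      rw [Finset.mem_Ico] at ha
      rw [Finset.mem_range]
      omega
    · intro a ha
      rw [Finset.mem_range] at ha
      rw [Finset.mem_Ico]
      omega
    · intro a ha
      rw [Finset.mem_Ico] at ha
      omega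
    · intro a ha
      rw [Finset.mem_range] at ha
      omega
    · intro a ha
      rfl
  rw [hgeom] at hsplit
  have hone : (1:ℕ) ≤ 2^(k-1) := Nat.one_le_two_pow
  have hexp : (k-1) * 2^(k-1) = (k-2)*2^(k-1) + 2^(k-1) := by
    have h9 : k - 1 = (k-2) + 1 := by omega
    rw [h9, Nat.add_mul, one_mul]
  omega

/-- the doubling property of teasers over a common gap -/
lemma doubling (hk : 4 ≤ k) {v w : ℕ × ℕ} (hv : v ∈ Vt k) (hw : w ∈ Vt k) (g : ℕ)
    (hvy : v.2 ≤ g) (hwy : w.2 ≤ g) (hvt : g + 1 ≤ tgt v) (hlt : tgt v < tgt w) :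
    2 * (tgt v - g) ≤ tgt w - g := by
  obtain ⟨hv1, hv2, hv3, hv4, hv5⟩ := Vt_mem hv
  obtain ⟨hw1, hw2, hw3, hw4, hw5⟩ := Vt_mem hw
  unfold tgt at hvt hlt ⊢
  rcases Nat.lt_trichotomy v.1 w.1 with hj | hj | hj
  · -- v.1 < w.1 : the doubling case
    have hP2 : (2:ℕ)^(v.1+1) = 2*2^v.1 := by rw [pow_succ]; ring
    obtain ⟨A2, hA2⟩ : 2^(v.1+1) ∣ w.2 + 2^w.1 :=
      dvd_add (dvd_trans (pow_dvd_pow 2 (by omega)) hw4) (pow_dvd_pow 2 (by omega))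
    obtain ⟨B2, hB2⟩ := hv4
    rw [hP2] at hA2 hB2
    have hPpos : 0 < (2:ℕ)^v.1 := Nat.pow_pos (by norm_num)
    have hAB : B2 < A2 := by
      rcases Nat.lt_or_ge B2 A2 with h | h
      · exact h
      · exfalso
        have hmul : 2*2^v.1*A2 ≤ 2*2^v.1*B2 := Nat.mul_le_mul_left _ h
        omega
    have hmul2 : 2*2^v.1*(B2+1) ≤ 2*2^v.1*A2 := Nat.mul_le_mul_left _ (by omega)
    have hms : 2*2^v.1*(B2+1) = 2*2^v.1*B2 + 2*2^v.1 := by ring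
    omega
  · -- equal scales: impossible
    exfalso
    obtain ⟨a, ha⟩ := hv4
    obtain ⟨b, hb⟩ := hw4
    rw [hj] at ha
    have hpe : (2:ℕ)^v.1 = 2^w.1 := by rw [hj]
    have hPpos : 0 < (2:ℕ)^(w.1+1) := Nat.pow_pos (by norm_num)
    have hab : a < b := by
      rcases Nat.lt_or_ge a b with h | h
      · exact h
      · exfalso
        have hmul : 2^(w.1+1)*b ≤ 2^(w.1+1)*a := Nat.mul_le_mul_left _ h
        omega
    have hstep : 2^(w.1+1)*(a+1) ≤ 2^(w.1+1)*b := Nat.mul_le_mul_left _ (by omega)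
    have hms : 2^(w.1+1)*(a+1) = 2^(w.1+1)*a + 2^(w.1+1) := by ring
    have hhalf : (2:ℕ)^(w.1+1) = 2^w.1 + 2^w.1 := by rw [pow_succ]; ring
    omega
  · -- v.1 > w.1 : impossible
    exfalso
    have hP2 : (2:ℕ)^(w.1+1) = 2*2^w.1 := by rw [pow_succ]; ring
    obtain ⟨E2, hE2⟩ : 2^(w.1+1) ∣ v.2 + 2^v.1 :=
      dvd_add (dvd_trans (pow_dvd_pow 2 (by omega)) hv4) (pow_dvd_pow 2 (by omega))
    obtain ⟨F2, hF2⟩ := hw4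
    rw [hP2] at hE2 hF2
    have hPpos : 0 < (2:ℕ)^w.1 := Nat.pow_pos (by norm_num)
    have hEF : E2 ≤ F2 := by
      rcases Nat.lt_or_ge F2 E2 with h | h
      · exfalso
        have hmul : 2*2^w.1*(F2+1) ≤ 2*2^w.1*E2 := Nat.mul_le_mul_left _ (by omega)
        have hms : 2*2^w.1*(F2+1) = 2*2^w.1*F2 + 2*2^w.1 := by ring
        omega
      · exact h
    have hge : 2*2^w.1*E2 ≤ 2*2^w.1*F2 := Nat.mul_le_mul_left _ hEF
    omega


/-! ### lower bound: schedule-dependent machinery -/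

def poseN (k : ℕ) (σ : ℕ → ℕ) (u : ℕ) : ℕ := if u = 0 then 0 else rN k (σ (u-1))

def stepN (k : ℕ) (σ : ℕ → ℕ) (u : ℕ) : ℕ := dN (poseN k σ u) (poseN k σ (u+1))

def costN (k : ℕ) (σ : ℕ → ℕ) : ℕ := ∑ u ∈ Finset.range (Nk k), stepN k σ u

lemma poseN_succ (σ : ℕ → ℕ) (u : ℕ) : poseN k σ (u+1) = rN k (σ u) := by
  simp [poseN]

lemma cost_eq (hk : 4 ≤ k) (σ : ℕ → ℕ) :
    schedCost lineDist (Nk k) (fun i => ((rN k i : ℕ) : ℤ)) 0 σ = (costN k σ : ℝ) := by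
  have hN := N_pos hk
  have h0 : Nk k - 1 + 1 = Nk k := by omega
  have h1 := Finset.sum_range_succ' (stepN k σ) (Nk k - 1)
  rw [h0] at h1
  have hfirst : lineDist 0 ((rN k (σ 0) : ℕ) : ℤ) = (stepN k σ 0 : ℝ) := by
    rw [show ((0:ℤ)) = ((0:ℕ):ℤ) by norm_num, lineDist_cast]
    simp [stepN, poseN]
  have hterm : ∀ t ∈ Finset.range (Nk k - 1),
      lineDist ((rN k (σ t) : ℕ) : ℤ) ((rN k (σ (t+1)) : ℕ) : ℤ) = ((stepN k σ (t+1) : ℕ) : ℝ) := by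
    intro t ht
    rw [lineDist_cast]
    simp [stepN, poseN]
  unfold schedCost
  rw [hfirst, Finset.sum_congr rfl hterm, ← Nat.cast_sum, ← Nat.cast_add]
  congr 1
  unfold costN
  rw [h1]
  exact Nat.add_comm _ _

lemma path_ge (σ : ℕ → ℕ) (a : ℕ) : ∀ b, a ≤ b →
    dN (poseN k σ a) (poseN k σ b) ≤ ∑ u ∈ Finset.Ico a b, stepN k σ u := by
  intro b
  induction b with
  | zero =>
    intro h
    have ha : a = 0 := by omega
    subst ha
    simp [dN]
  | succ b ih =>
    intro h
    rcases Nat.eq_or_lt_of_le h with he | hlt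
    · rw [he]
      simp [dN]
    · have hab : a ≤ b := by omega
      rw [Finset.sum_Ico_succ_top hab]
      calc dN (poseN k σ a) (poseN k σ (b+1))
          ≤ dN (poseN k σ a) (poseN k σ b) + dN (poseN k σ b) (poseN k σ (b+1)) :=
            dN_triangle _ _ _
      _ ≤ (∑ u ∈ Finset.Ico a b, stepN k σ u) + stepN k σ b :=
            Nat.add_le_add (ih hab) (le_refl _)

lemma block_visit (hk : 4 ≤ k) {κ : ℕ} (hκ1 : 1 ≤ κ) (hκk : κ ≤ k) {σ : ℕ → ℕ}
    (hsch : IsSchedule (Nk k) σ) (hfea : IsFeasible (Nk k) κ σ) :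
    ∀ p, ∃ t, p < Kk k → (t < Nk k ∧ rN k (σ t) = p ∧
      Lk k * p + k ≤ t + κ ∧ t + κ ≤ Lk k * p + (k-1) + k) := by
  intro p
  by_cases hp : p < Kk k
  swap
  · exact ⟨0, fun h => absurd h hp⟩
  have hLk : Lk k = 2*k - 1 := rfl
  set c := Lk k * p + (k-1) with hc
  set M := c + k - κ with hM
  have hck : c + k = Lk k * (p+1) := by
    have : Lk k * (p+1) = Lk k * p + Lk k := by ring
    omega
  have hMN : M < Nk k := by
    have h2 : Lk k * (p+1) ≤ Lk k * Kk k := Nat.mul_le_mul_left _ (by omega)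
    unfold Nk
    omega
  have hex : ∃ t, t ≤ M ∧ c ≤ σ t := by
    by_contra hall
    push_neg at hall
    have hmaps : ∀ t ∈ Finset.range (M+1), σ t ∈ Finset.range c := by
      intro t ht
      rw [Finset.mem_range] at ht ⊢
      exact hall t (by omega)
    have hinj : Set.InjOn σ (Finset.range (M+1)) := by
      intro a ha b hb hab
      simp only [Finset.coe_range, Set.mem_Iio] at ha hb
      exact hsch.2.1 (by exact lt_of_lt_of_le ha (by omega)) (by exact lt_of_lt_of_le hb (by omega)) hab
    have := Finset.card_le_card_of_injOn σ hmaps hinj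
    rw [Finset.card_range, Finset.card_range] at this
    omega
  obtain ⟨t, htM, htc⟩ := hex
  have htN : t < Nk k := by omega
  have hfeat := hfea t htN
  have hσub : σ t < c + k := by omega
  have hσeq : σ t = Lk k * p + (k - 1 + (σ t - c)) := by omega
  refine ⟨t, fun _ => ⟨htN, ?_, by omega, by omega⟩⟩
  rw [hσeq, rN_block hk p _ (by omega)]

lemma serve_exists {σ : ℕ → ℕ} (hk : 4 ≤ k) (hsch : IsSchedule (Nk k) σ) :
    ∀ v, ∃ s, v ∈ Vt k → (s < Nk k ∧ σ s = idx k v) := by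
  intro v
  by_cases hv : v ∈ Vt k
  swap
  · exact ⟨0, fun h => absurd h hv⟩
  have hidx : idx k v ∈ {t | t < Nk k} := idx_lt hk hv
  obtain ⟨s, hs, hse⟩ := hsch.2.2 hidx
  exact ⟨s, fun _ => ⟨hs, hse⟩⟩

lemma pend_at (hk : 4 ≤ k) {κ : ℕ} (hκ1 : 1 ≤ κ) {σ : ℕ → ℕ}
    (hsch : IsSchedule (Nk k) σ) (hfea : IsFeasible (Nk k) κ σ)
    (sv : ℕ × ℕ → ℕ) (hsv : ∀ v ∈ Vt k, sv v < Nk k ∧ σ (sv v) = idx k v)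
    (u : ℕ) (hu : u < Nk k) :
    ((Vt k).filter (fun v => idx k v + 1 - κ ≤ u ∧ u < sv v)).card ≤ κ - 1 := by
  classical
  set F := (Vt k).filter (fun v => idx k v + 1 - κ ≤ u ∧ u < sv v) with hF
  set W := Finset.range (min (u+κ) (Nk k)) with hW
  set A1 := (Finset.range (u+1)).image σ with hA1
  set A2 := F.image (idx k) with hA2
  have hA1W : A1 ⊆ W := by
    intro x hx
    rw [hA1, Finset.mem_image] at hx
    obtain ⟨t, ht, rfl⟩ := hx
    rw [Finset.mem_range] at ht
    have htN : t < Nk k := by omega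
    have h1 := hfea t htN
    have h2 : σ t < Nk k := hsch.1 htN
    rw [hW, Finset.mem_range]
    omega
  have hA2W : A2 ⊆ W := by
    intro x hx
    rw [hA2, Finset.mem_image] at hx
    obtain ⟨v, hv, rfl⟩ := hx
    rw [hF, Finset.mem_filter] at hv
    have h1 := idx_lt hk hv.1
    rw [hW, Finset.mem_range]
    omega
  have hdisj : Disjoint A1 A2 := by
    rw [Finset.disjoint_left]
    intro x hx1 hx2
    rw [hA1, Finset.mem_image] at hx1
    rw [hA2, Finset.mem_image] at hx2
    obtain ⟨t, ht, hte⟩ := hx1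
    obtain ⟨v, hv, hve⟩ := hx2
    rw [Finset.mem_range] at ht
    rw [hF, Finset.mem_filter] at hv
    obtain ⟨hsvN, hsve⟩ := hsv v hv.1
    have htN : t < Nk k := by omega
    have : t = sv v := by
      apply hsch.2.1 htN hsvN
      rw [hte, hsve]
      exact hve.symm
    omega
  have hcard1 : A1.card = u + 1 := by
    rw [hA1, Finset.card_image_of_injOn, Finset.card_range]
    intro a ha b hb hab
    simp only [Finset.coe_range, Set.mem_Iio] at ha hb
    exact hsch.2.1 (show a ∈ {t | t < Nk k} from by simp only [Set.mem_setOf_eq]; omega)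
      (show b ∈ {t | t < Nk k} from by simp only [Set.mem_setOf_eq]; omega) hab
  have hcard2 : A2.card = F.card := by
    rw [hA2, Finset.card_image_of_injOn]
    intro a ha b hb hab
    have haV : a ∈ Vt k := by
      have := Finset.mem_coe.mp ha; rw [hF, Finset.mem_filter] at this; exact this.1
    have hbV : b ∈ Vt k := by
      have := Finset.mem_coe.mp hb; rw [hF, Finset.mem_filter] at this; exact this.1
    exact idx_injOn hk haV hbV hab
  have hunion : (A1 ∪ A2).card = A1.card + A2.card := Finset.card_union_of_disjoint hdisj
  have hsub : A1 ∪ A2 ⊆ W := Finset.union_subset hA1W hA2W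
  have := Finset.card_le_card hsub
  rw [hunion, hcard1, hcard2, hW, Finset.card_range] at this
  omega

lemma pend_total (hk : 4 ≤ k) {κ : ℕ} (hκ1 : 1 ≤ κ) {σ : ℕ → ℕ}
    (hsch : IsSchedule (Nk k) σ) (hfea : IsFeasible (Nk k) κ σ)
    (sv : ℕ × ℕ → ℕ) (hsv : ∀ v ∈ Vt k, sv v < Nk k ∧ σ (sv v) = idx k v) :
    ∑ v ∈ Vt k, (Finset.Ico (idx k v + 1 - κ) (sv v)).card ≤ (κ-1) * Nk k := by
  classical
  have hIco : ∀ v ∈ Vt k, (Finset.Ico (idx k v + 1 - κ) (sv v)).card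
      = ∑ u ∈ Finset.range (Nk k), (if idx k v + 1 - κ ≤ u ∧ u < sv v then 1 else 0) := by
    intro v hv
    have hsvN := (hsv v hv).1
    have hset : Finset.Ico (idx k v + 1 - κ) (sv v)
        = (Finset.range (Nk k)).filter (fun u => idx k v + 1 - κ ≤ u ∧ u < sv v) := by
      ext u
      simp only [Finset.mem_Ico, Finset.mem_filter, Finset.mem_range]
      omega
    rw [hset, Finset.card_filter]
  rw [Finset.sum_congr rfl hIco, Finset.sum_comm]
  have hb : ∀ u ∈ Finset.range (Nk k),
      (∑ v ∈ Vt k, if idx k v + 1 - κ ≤ u ∧ u < sv v then 1 else 0) ≤ κ - 1 := by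
    intro u hu
    rw [← Finset.card_filter]
    exact pend_at hk hκ1 hsch hfea sv hsv u (Finset.mem_range.mp hu)
  calc ∑ u ∈ Finset.range (Nk k), ∑ v ∈ Vt k, (if idx k v + 1 - κ ≤ u ∧ u < sv v then 1 else 0)
      ≤ ∑ u ∈ Finset.range (Nk k), (κ-1) := Finset.sum_le_sum hb
  _ = (κ-1) * Nk k := by
      rw [Finset.sum_const, Finset.card_range, smul_eq_mul, Nat.mul_comm]


/-! ### the travels in one gap -/

def TravD (k : ℕ) (σ : ℕ → ℕ) (tp : ℕ → ℕ) (g : ℕ) : ℕ :=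
  ∑ u ∈ Finset.Ico (if g = 0 then 0 else tp (g-1) + 1) (tp g + 1), stepN k σ u

/-! ### the main lower bound -/

lemma lower_main (hk : 4 ≤ k) {κ : ℕ} (hκ1 : 1 ≤ κ) (hκk : 4*κ = k) {σ : ℕ → ℕ}
    (hsch : IsSchedule (Nk k) σ) (hfea : IsFeasible (Nk k) κ σ) :
    κ * Kk k ≤ costN k σ := by
  classical
  have hLk : Lk k = 2*k - 1 := rfl
  have hκle : κ ≤ k := by omega
  have hKpos : 0 < Kk k := K_pos
  -- block visits
  choose tp htp using block_visit hk hκ1 hκle hsch hfea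
  have htpN : ∀ p, p < Kk k → tp p < Nk k := fun p hp => (htp p hp).1
  have htppos : ∀ p, p < Kk k → rN k (σ (tp p)) = p := fun p hp => (htp p hp).2.1
  have htplo : ∀ p, p < Kk k → Lk k * p + k ≤ tp p + κ := fun p hp => (htp p hp).2.2.1
  have htphi : ∀ p, p < Kk k → tp p + κ ≤ Lk k * p + (k-1) + k := fun p hp => (htp p hp).2.2.2
  have htpsucc : ∀ p, p + 1 < Kk k → tp p < tp (p+1) := by
    intro p hp1
    have h1 := htphi p (by omega)
    have h2 := htplo (p+1) hp1
    have h3 : Lk k * (p+1) = Lk k * p + Lk k := by ring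
    omega
  have htpmono : ∀ p q, q < Kk k → p < q → tp p < tp q := by
    intro p q
    induction q with
    | zero => omega
    | succ n ih =>
      intro hq hpq
      rcases Nat.lt_or_ge p n with h | h
      · exact lt_trans (ih (by omega) h) (htpsucc n hq)
      · have hpn : p = n := by omega
        subst hpn
        exact htpsucc p hq
  -- serve steps
  choose sv hsv using serve_exists hk hsch
  have hsvfea : ∀ v ∈ Vt k, idx k v + 1 ≤ sv v + κ := by
    intro v hv
    have h1 := (hsv v hv).1
    have h2 := (hsv v hv).2
    have h3 := hfea (sv v) h1
    rw [h2] at h3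
    omega
  -- gap assignment for early teasers
  have hgex : ∀ v, ∃ g, (v ∈ Vt k ∧ sv v ≤ tp (tgt v - 1)) →
      (v.2 ≤ g ∧ g + 1 ≤ tgt v ∧ sv v ≤ tp g ∧ g < Kk k ∧ (1 ≤ g → tp (g-1) < sv v)) := by
    intro v
    by_cases hc : v ∈ Vt k ∧ sv v ≤ tp (tgt v - 1)
    swap
    · exact ⟨0, fun h => absurd h hc⟩
    obtain ⟨hvV, hearly⟩ := hc
    obtain ⟨hj1, hjk, hyK, hdvd, hyle⟩ := Vt_mem hvV
    have h2j : 2 ≤ 2^v.1 := by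
      calc (2:ℕ) = 2^1 := by norm_num
      _ ≤ 2^v.1 := Nat.pow_le_pow_right (by norm_num) hj1
    have htgt : tgt v = v.2 + 2^v.1 := rfl
    have hq2 : v.2 + 2 ≤ tgt v := by omega
    have htl := tgt_lt hvV
    have hqK : tgt v < Kk k := by omega
    have hPex : ∃ g, v.2 ≤ g ∧ sv v ≤ tp g := ⟨tgt v - 1, by omega, hearly⟩
    have hg1 := (Nat.find_spec hPex).1
    have hg2 := (Nat.find_spec hPex).2
    have hgle : Nat.find hPex ≤ tgt v - 1 := Nat.find_min' hPex ⟨by omega, hearly⟩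
    refine ⟨Nat.find hPex, fun _ => ⟨hg1, by omega, hg2, by omega, ?_⟩⟩
    intro hgpos
    rcases Nat.lt_or_ge (Nat.find hPex - 1) v.2 with hcase | hcase
    · -- the gap is right at the start of the teaser's chunk
      have hy1 : 1 ≤ v.2 := by omega
      have hfw := htphi (v.2 - 1) (by omega)
      have hsplit : Lk k * v.2 = Lk k * (v.2 - 1) + Lk k := by
        rw [← Nat.mul_succ]
        congr 1
        omega
      have hfe := hsvfea v hvV
      have hidxe : idx k v = Lk k * v.2 + (v.1 - 1) := rfl
      have hgy : Nat.find hPex = v.2 := by omega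
      rw [hgy]
      omega
    · have hmin := Nat.find_min hPex (m := Nat.find hPex - 1) (by omega)
      push_neg at hmin
      have := hmin hcase
      omega
  choose gv hgv using hgex
  -- per-teaser demand inequality
  have hperv : ∀ v ∈ Vt k,
      Lk k * (2^v.1 - 1) ≤
        Lk k * (if sv v ≤ tp (tgt v - 1) then tgt v - gv v else 0)
          + (Finset.Ico (idx k v + 1 - κ) (sv v)).card := by
    intro v hv
    obtain ⟨hj1, hjk, hyK, hdvd, hyle⟩ := Vt_mem hv
    have h2j : 2 ≤ 2^v.1 := by
      calc (2:ℕ) = 2^1 := by norm_num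
      _ ≤ 2^v.1 := Nat.pow_le_pow_right (by norm_num) hj1
    have htgt : tgt v = v.2 + 2^v.1 := rfl
    have htl := tgt_lt hv
    have hqK : tgt v < Kk k := by omega
    have hdurc : (Finset.Ico (idx k v + 1 - κ) (sv v)).card = sv v - (idx k v + 1 - κ) :=
      Nat.card_Ico _ _
    have hidxe : idx k v = Lk k * v.2 + (v.1 - 1) := rfl
    have hj2 : v.1 - 1 ≤ k - 2 := by omega
    have hfe := hsvfea v hv
    by_cases hE : sv v ≤ tp (tgt v - 1)
    · obtain ⟨hgy, hgq, hgtp, hgK, hgprev⟩ := hgv v ⟨hv, hE⟩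
      rw [if_pos hE]
      rcases Nat.eq_or_lt_of_le hgy with hge | hgt
      · -- gap at the chunk of the teaser
        have hDle : 2^v.1 - 1 ≤ tgt v - gv v := by omega
        calc Lk k * (2^v.1 - 1) ≤ Lk k * (tgt v - gv v) := Nat.mul_le_mul_left _ hDle
        _ ≤ _ := Nat.le_add_right _ _
      · -- strictly later gap: pay pending
        have hgpos : 1 ≤ gv v := by omega
        have hprev := hgprev hgpos
        have hfw := htplo (gv v - 1) (by omega)
        have hsplitD : 2^v.1 - 1 = (tgt v - gv v) + (gv v - 1 - v.2) := by omega
        have hLsplit : Lk k * (gv v - 1) = Lk k * v.2 + Lk k * (gv v - 1 - v.2) := by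
          rw [← Nat.mul_add]
          congr 1
          omega
        rw [hsplitD, Nat.mul_add]
        have hkey : Lk k * (gv v - 1 - v.2) ≤ (Finset.Ico (idx k v + 1 - κ) (sv v)).card := by
          omega
        omega
    · -- late teaser: pending covers the whole demand
      push_neg at hE
      rw [if_neg (by omega)]
      have hfw := htplo (tgt v - 1) (by omega)
      have hsplitD : 2^v.1 - 1 = tgt v - 1 - v.2 := by omega
      have hLsplit : Lk k * (tgt v - 1) = Lk k * v.2 + Lk k * (tgt v - 1 - v.2) := by
        rw [← Nat.mul_add]
        congr 1
        omega
      rw [Nat.mul_zero, Nat.zero_add, hsplitD]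
      omega
  -- travel decomposition
  have htravsum : ∑ g ∈ Finset.range (Kk k), TravD k σ tp g ≤ costN k σ := by
    have hclaim : ∀ m, 1 ≤ m → m ≤ Kk k →
        ∑ g ∈ Finset.range m, TravD k σ tp g = ∑ u ∈ Finset.range (tp (m-1) + 1), stepN k σ u := by
      intro m
      induction m with
      | zero => omega
      | succ n ih =>
        intro h1 hm
        rcases Nat.eq_or_lt_of_le h1 with he | hlt
        · have hn0 : n = 0 := by omega
          subst hn0
          rw [Finset.sum_range_one]
          unfold TravD
          rw [if_pos rfl, Finset.range_eq_Ico]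
        · have hn1 : 1 ≤ n := by omega
          rw [Finset.sum_range_succ, ih hn1 (by omega)]
          have hmono := htpmono (n-1) n (by omega) (by omega)
          have heq : TravD k σ tp n = ∑ u ∈ Finset.Ico (tp (n-1) + 1) (tp n + 1), stepN k σ u := by
            unfold TravD
            rw [if_neg (by omega)]
          rw [heq, show n + 1 - 1 = n from rfl]
          simp only [Finset.range_eq_Ico]
          exact Finset.sum_Ico_consecutive _ (by omega) (by omega)
    have h2 := hclaim (Kk k) (by omega) (le_refl _)
    rw [h2]
    unfold costN
    apply Finset.sum_le_sum_of_subset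
    rw [Finset.range_subset_range]
    have := htpN (Kk k - 1) (by omega)
    omega
  -- per-gap inequality
  have hgap : ∀ g ∈ Finset.range (Kk k),
      ((if g = 0 then 0 else 1) +
        ∑ v ∈ (Vt k).filter (fun v => (sv v ≤ tp (tgt v - 1)) ∧ gv v = g), (tgt v - g))
        ≤ TravD k σ tp g := by
    intro g hgR
    rw [Finset.mem_range] at hgR
    set F := (Vt k).filter (fun v => (sv v ≤ tp (tgt v - 1)) ∧ gv v = g) with hF
    have hFfact : ∀ v ∈ F, v ∈ Vt k ∧ v.2 ≤ g ∧ g + 1 ≤ tgt v ∧ sv v ≤ tp g ∧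
        (1 ≤ g → tp (g-1) < sv v) := by
      intro v hvF
      rw [hF, Finset.mem_filter] at hvF
      obtain ⟨hvV, hE, hgeq⟩ := hvF
      have h := hgv v ⟨hvV, hE⟩
      rw [hgeq] at h
      exact ⟨hvV, h.1, h.2.1, h.2.2.1, h.2.2.2.2⟩
    rcases Finset.eq_empty_or_nonempty F with hFe | hFne
    · rw [hFe]
      simp only [Finset.sum_empty, Nat.add_zero]
      by_cases hg0 : g = 0
      · rw [if_pos hg0]
        exact Nat.zero_le _
      · rw [if_neg hg0]
        have hg1 : 1 ≤ g := by omega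
        have hpath := path_ge (k := k) σ (tp (g-1) + 1) (tp g + 1)
          (by have := htpmono (g-1) g hgR (by omega); omega)
        rw [poseN_succ, poseN_succ, htppos (g-1) (by omega), htppos g hgR] at hpath
        have hd1 : dN (g-1) g = 1 := by unfold dN; omega
        unfold TravD
        rw [if_neg hg0]
        omega
    · obtain ⟨v0, hv0⟩ := hFne
      have hTne : (F.image tgt).Nonempty := ⟨tgt v0, Finset.mem_image_of_mem _ hv0⟩
      obtain ⟨vM, hvM, hvMe⟩ := Finset.mem_image.mp (Finset.max'_mem (F.image tgt) hTne)
      obtain ⟨hvMV, hvMy, hvMq, hvMtp, hvMprev⟩ := hFfact vM hvM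
      set qT := (F.image tgt).max' hTne with hqTdef
      -- chain bound
      have hchain : ∑ v ∈ F, (tgt v - g) ≤ 2 * (qT - g) := by
        have hinj : ∀ a ∈ F, ∀ b ∈ F, tgt a - g = tgt b - g → a = b := by
          intro a ha b hb hab
          obtain ⟨haV, hay, haq, -, -⟩ := hFfact a ha
          obtain ⟨hbV, hby, hbq, -, -⟩ := hFfact b hb
          apply tgt_injOn haV hbV
          omega
        have himg : ∑ x ∈ F.image (fun v => tgt v - g), id x = ∑ v ∈ F, (tgt v - g) :=
          Finset.sum_image hinj
        rw [← himg]
        apply chain_sum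
        · intro a haI b hbI hab
          obtain ⟨va, hva, hvae⟩ := Finset.mem_image.mp haI
          obtain ⟨vb, hvb, hvbe⟩ := Finset.mem_image.mp hbI
          obtain ⟨haV, hay, haq, -, -⟩ := hFfact va hva
          obtain ⟨hbV, hby, hbq, -, -⟩ := hFfact vb hvb
          have hlt : tgt va < tgt vb := by omega
          have := doubling hk haV hbV g hay hby haq hlt
          omega
        · intro a haI
          obtain ⟨va, hva, hvae⟩ := Finset.mem_image.mp haI
          have hle := Finset.le_max' (F.image tgt) (tgt va) (Finset.mem_image_of_mem _ hva)
          omega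
      -- travel bound via waypoint
      have hs0b : sv vM + 1 ≤ tp g + 1 := by omega
      have hpos0 : poseN k σ (sv vM + 1) = qT := by
        rw [poseN_succ, (hsv vM hvMV).2, rN_idx hk hvMV, hvMe]
      have hposb : poseN k σ (tp g + 1) = g := by
        rw [poseN_succ, htppos g hgR]
      by_cases hg0 : g = 0
      · subst hg0
        have hsplit := Finset.sum_Ico_consecutive (stepN k σ) (show 0 ≤ sv vM + 1 by omega) hs0b
        have hp1 := path_ge (k := k) σ 0 (sv vM + 1) (by omega)
        have hp2 := path_ge (k := k) σ (sv vM + 1) (tp 0 + 1) hs0b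
        rw [hpos0] at hp1 hp2
        rw [hposb] at hp2
        have hpz : poseN k σ 0 = 0 := rfl
        rw [hpz] at hp1
        unfold TravD
        simp only [eq_self_iff_true, if_true]
        rw [← hsplit]
        have hd1 : dN 0 qT = qT := by unfold dN; omega
        have hd2 : dN qT 0 = qT := by unfold dN; omega
        rw [hd1] at hp1
        rw [hd2] at hp2
        omega
      · have hg1 : 1 ≤ g := by omega
        have hs0a : tp (g-1) + 1 ≤ sv vM := by
          have := hvMprev hg1
          omega
        have hsplit := Finset.sum_Ico_consecutive (stepN k σ)
          (show tp (g-1) + 1 ≤ sv vM + 1 by omega) hs0b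
        have hp1 := path_ge (k := k) σ (tp (g-1) + 1) (sv vM + 1) (by omega)
        have hp2 := path_ge (k := k) σ (sv vM + 1) (tp g + 1) hs0b
        rw [hpos0] at hp1 hp2
        rw [hposb] at hp2
        rw [poseN_succ, htppos (g-1) (by omega)] at hp1
        unfold TravD
        simp only [if_neg hg0]
        rw [← hsplit]
        have hd1 : dN (g-1) qT = qT - g + 1 := by unfold dN; omega
        have hd2 : dN qT g = qT - g := by unfold dN; omega
        rw [hd1] at hp1
        rw [hd2] at hp2
        omega
  -- collect the fiber sums
  have hfibsum : ∑ g ∈ Finset.range (Kk k),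
      ∑ v ∈ (Vt k).filter (fun v => (sv v ≤ tp (tgt v - 1)) ∧ gv v = g), (tgt v - g)
      = ∑ v ∈ Vt k, (if sv v ≤ tp (tgt v - 1) then tgt v - gv v else 0) := by
    have h1 : ∑ v ∈ Vt k, (if sv v ≤ tp (tgt v - 1) then tgt v - gv v else 0)
        = ∑ v ∈ (Vt k).filter (fun v => sv v ≤ tp (tgt v - 1)), (tgt v - gv v) :=
      (Finset.sum_filter _ _).symm
    rw [h1]
    have hmaps : ∀ v ∈ (Vt k).filter (fun v => sv v ≤ tp (tgt v - 1)),
        gv v ∈ Finset.range (Kk k) := by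
      intro v hv
      rw [Finset.mem_filter] at hv
      have := (hgv v ⟨hv.1, hv.2⟩).2.2.2.1
      rw [Finset.mem_range]
      exact this
    have h2 := Finset.sum_fiberwise_of_maps_to hmaps (fun v => tgt v - gv v)
    rw [← h2]
    apply Finset.sum_congr rfl
    intro g hg
    rw [Finset.filter_filter]
    apply Finset.sum_congr rfl
    intro v hv
    rw [Finset.mem_filter] at hv
    rw [hv.2.2]
  -- assemble
  have hS1 : Lk k * (∑ v ∈ Vt k, (2^v.1 - 1)) ≤
      Lk k * (∑ v ∈ Vt k, (if sv v ≤ tp (tgt v - 1) then tgt v - gv v else 0)) + (κ-1) * Nk k := by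
    calc Lk k * (∑ v ∈ Vt k, (2^v.1 - 1)) = ∑ v ∈ Vt k, Lk k * (2^v.1 - 1) := Finset.mul_sum _ _ _
    _ ≤ ∑ v ∈ Vt k, (Lk k * (if sv v ≤ tp (tgt v - 1) then tgt v - gv v else 0)
          + (Finset.Ico (idx k v + 1 - κ) (sv v)).card) := Finset.sum_le_sum hperv
    _ = ∑ v ∈ Vt k, Lk k * (if sv v ≤ tp (tgt v - 1) then tgt v - gv v else 0)
          + ∑ v ∈ Vt k, (Finset.Ico (idx k v + 1 - κ) (sv v)).card := Finset.sum_add_distrib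
    _ ≤ ∑ v ∈ Vt k, Lk k * (if sv v ≤ tp (tgt v - 1) then tgt v - gv v else 0) + (κ-1) * Nk k :=
          Nat.add_le_add_left (pend_total hk hκ1 hsch hfea sv hsv) _
    _ = _ := by rw [← Finset.mul_sum]
  have hcancel : (∑ v ∈ Vt k, (2^v.1 - 1)) ≤
      (∑ v ∈ Vt k, (if sv v ≤ tp (tgt v - 1) then tgt v - gv v else 0)) + (κ-1) * Kk k := by
    have h3 : (κ-1) * Nk k = Lk k * ((κ-1) * Kk k) := by unfold Nk; ring
    rw [h3, ← Nat.mul_add] at hS1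
    exact Nat.le_of_mul_le_mul_left hS1 (L_pos hk)
  have htrav2 : (∑ v ∈ Vt k, (if sv v ≤ tp (tgt v - 1) then tgt v - gv v else 0)) + (Kk k - 1)
      ≤ costN k σ := by
    have h5 := Finset.sum_le_sum hgap
    rw [Finset.sum_add_distrib] at h5
    have h6 : ∑ g ∈ Finset.range (Kk k), (if g = 0 then (0:ℕ) else 1) = Kk k - 1 := by
      conv_lhs => rw [show Kk k = Kk k - 1 + 1 by omega]
      rw [Finset.sum_range_succ']
      simp
    rw [h6, hfibsum] at h5
    omega
  -- final arithmetic
  have hsum := sumD hk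
  have hKK : Kk k = 2 * 2^(k-1) := by
    unfold Kk
    conv_lhs => rw [show k = k-1+1 by omega]
    rw [pow_succ]
    ring
  have he1 : (κ-1) * Kk k + Kk k = κ * Kk k := by
    calc (κ-1) * Kk k + Kk k = (κ-1+1) * Kk k := by ring
    _ = κ * Kk k := by rw [show κ-1+1 = κ by omega]
  have he2 : (k-2) * 2^(k-1) + Kk k = 2 * (κ * Kk k) := by
    have ha : (k-2) * 2^(k-1) + 2*2^(k-1) = k * 2^(k-1) := by
      calc (k-2)*2^(k-1) + 2*2^(k-1) = (k-2+2) * 2^(k-1) := by ring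
      _ = k * 2^(k-1) := by rw [show k-2+2 = k by omega]
    have hb : k * 2^(k-1) = 2*(κ * (2*2^(k-1))) := by
      rw [← hκk]; ring
    rw [hKK] at *
    omega
  omega

end Stmt9

/- **Statement 9 (hard instance on the line).** For every `k ≥ 4` divisible by
`4` there is a request sequence on the line metric `ℤ` with a `k`-feasible
schedule of cost at most `2^k − 1`, while every `(k/4)`-feasible schedule has
cost at least `(k/4)·2^k`. -/
theorem stmt_9 (k : ℕ) (hk : 4 ≤ k) (hdvd : 4 ∣ k) :
    ∃ n : ℕ, 1 ≤ n ∧ ∃ (r : ℕ → ℤ) (x₀ : ℤ),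
      (∃ σ, IsSchedule n σ ∧ IsFeasible n k σ ∧
        schedCost lineDist n r x₀ σ ≤ 2 ^ k - 1) ∧
      (∀ σ, IsSchedule n σ → IsFeasible n (k / 4) σ →
        (k : ℝ) / 4 * 2 ^ k ≤ schedCost lineDist n r x₀ σ) := by
  obtain ⟨κ, hκ⟩ := hdvd
  have hκ1 : 1 ≤ κ := by
    rcases Nat.eq_zero_or_pos κ with h | h
    · omega
    · exact h
  refine ⟨Stmt9.Nk k, ?_, fun i => ((Stmt9.rN k i : ℕ) : ℤ), 0, ?_, ?_⟩
  · have := Stmt9.N_pos hk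
    omega
  · exact Stmt9.upper_bundle hk
  · intro σ hsch hfea
    have hk4 : k / 4 = κ := by omega
    rw [hk4] at hfea
    have h1 := Stmt9.lower_main hk hκ1 (by omega) hsch hfea
    rw [Stmt9.cost_eq hk σ]
    have h2 : ((κ * Stmt9.Kk k : ℕ) : ℝ) ≤ ((Stmt9.costN k σ : ℕ) : ℝ) := Nat.cast_le.mpr h1
    have h3 : (k : ℝ) / 4 * 2 ^ k = ((κ * Stmt9.Kk k : ℕ) : ℝ) := by
      unfold Stmt9.Kk
      push_cast
      rw [hκ]
      push_cast
      ring
    rw [h3]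
    exact h2
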